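/- Let p be a probability sequence with p_1 < 1 and mean μ(p) = 1, so that the Galton–Watson tree 𝒯 = 𝒯^p is almost surely finite. For a finite ordered rooted tree T with root o, let P(T,x) := Σ_{v∈T} x^{d(v,o)}. For complex z, x, y with |z| < 1 and |x|, |y| ≤ 1, define Φ(z) := Σ_{k≥0} p_k z^k, A(z) := E[z^{|𝒯|}], B(z,x) := E[z^{|𝒯|} P(𝒯,x)], and C(z,x,y) := E[z^{|𝒯|} P(𝒯,x) P(𝒯,y)] (all these expectations converge absolutely). Then for all such z, x, y: C(z,x,y) · (1 − x y z Φ′(A(z))) = x y z Φ″(A(z)) B(z,x) B(z,y) + B(z,x) + B(z,y) − A(z). -/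

import Mathlib

inductive OTree : Type where
  | node : List OTree → OTree

namespace OTree

mutual
def positions : OTree → List (List ℕ)
  | .node ts => [] :: posList ts 0

def posList : List OTree → ℕ → List (List ℕ)
  | [], _ => []
  | t :: ts, i => (positions t).map (fun q => i :: q) ++ posList ts (i + 1)
end

/-- number of vertices -/
def size (T : OTree) : ℕ := T.positions.length

/-- number of children of the vertex at position `q` -/
def childCount (T : OTree) (q : List ℕ) : ℕ :=
  (T.positions.filter (fun r => decide (r ≠ [] ∧ r.dropLast = q))).length

def rootDeg (T : OTree) : ℕ := T.childCount []

def profile (T : OTree) (i : ℕ) : ℕ :=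
  (T.positions.filter (fun q => decide (q.length = i))).length

def lcp : List ℕ → List ℕ → ℕ
  | a :: as, b :: bs => if a = b then lcp as bs + 1 else 0
  | _, _ => 0

def pdist (q r : List ℕ) : ℕ := q.length + r.length - 2 * lcp q r

def distProfile (T : OTree) (i : ℕ) : ℕ :=
  (T.positions.map (fun q =>
    (T.positions.filter (fun r => decide (pdist q r = i))).length)).sum

noncomputable def gwWeight (p : ℕ → ℝ) (T : OTree) : ℝ :=
  (T.positions.map (fun q => p (T.childCount q))).prod

noncomputable def gwZ (p : ℕ → ℝ) (n : ℕ) : ℝ :=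
  ∑' T : OTree, if T.size = n then gwWeight p T else 0

noncomputable def gwExp (p : ℕ → ℝ) (n : ℕ) (f : OTree → ℝ) : ℝ :=
  (∑' T : OTree, if T.size = n then gwWeight p T * f T else 0) / gwZ p n

end OTree

open OTree

/-- `P(T,x) = Σ_{v ∈ T} x^{d(v,o)}` -/
noncomputable def Pfun (T : OTree) (x : ℂ) : ℂ :=
  (T.positions.map (fun q => x ^ q.length)).sum

/-- `A(z) = E[z^{|𝒯|}]` -/
noncomputable def Afun (p : ℕ → ℝ) (z : ℂ) : ℂ :=
  ∑' T : OTree, (gwWeight p T : ℂ) * z ^ T.size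

/-- `B(z,x) = E[z^{|𝒯|} P(𝒯,x)]` -/
noncomputable def Bfun (p : ℕ → ℝ) (z x : ℂ) : ℂ :=
  ∑' T : OTree, (gwWeight p T : ℂ) * z ^ T.size * Pfun T x

/-- `C(z,x,y) = E[z^{|𝒯|} P(𝒯,x) P(𝒯,y)]` -/
noncomputable def Cfun (p : ℕ → ℝ) (z x y : ℂ) : ℂ :=
  ∑' T : OTree, (gwWeight p T : ℂ) * z ^ T.size * Pfun T x * Pfun T y

/-- the derivative `Φ′` of the offspring generating function `Φ(u) = Σ_k p_k u^k` -/
noncomputable def PhiD (p : ℕ → ℝ) (u : ℂ) : ℂ :=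
  ∑' k : ℕ, (k : ℂ) * (p k : ℂ) * u ^ (k - 1)

/-- the second derivative `Φ″` of the offspring generating function -/
noncomputable def PhiDD (p : ℕ → ℝ) (u : ℂ) : ℂ :=
  ∑' k : ℕ, (k : ℂ) * ((k : ℂ) - 1) * (p k : ℂ) * u ^ (k - 2)

namespace OTree

theorem strongInd (motive : OTree → Prop)
    (h : ∀ ts : List OTree, (∀ t ∈ ts, motive t) → motive (node ts)) : ∀ t, motive t := by
  have key : ∀ n (t : OTree), sizeOf t ≤ n → motive t := by
    intro n
    induction n with
    | zero => intro t ht; cases t with | node ts => simp at ht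
    | succ n ih =>
      intro t ht
      cases t with
      | node ts =>
        apply h
        intro c hc
        apply ih
        have h1 : sizeOf c < sizeOf ts := List.sizeOf_lt_of_mem hc
        have h2 : sizeOf (node ts) = 1 + sizeOf ts := by simp
        omega
  intro t; exact key (sizeOf t) t le_rfl

def unnode : OTree → List OTree | node ts => ts

def eqList : OTree ≃ List OTree where
  toFun := unnode
  invFun := node
  left_inv := fun t => by cases t; rfl
  right_inv := fun _ => rfl

theorem posList_ne_nil : ∀ (ts : List OTree) (i : ℕ), ∀ r ∈ posList ts i, r ≠ [] := by
  intro ts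
  induction ts with
  | nil => intro i r hr; simp [posList] at hr
  | cons t ts ih =>
    intro i r hr
    rw [posList] at hr
    rcases List.mem_append.1 hr with hr | hr
    · rcases List.mem_map.1 hr with ⟨q, _, rfl⟩; simp
    · exact ih _ r hr

theorem posList_head : ∀ (ts : List OTree) (i : ℕ), ∀ r ∈ posList ts i, ∃ j q, r = j :: q ∧ i ≤ j := by
  intro ts
  induction ts with
  | nil => intro i r hr; simp [posList] at hr
  | cons t ts ih =>
    intro i r hr
    rw [posList] at hr
    rcases List.mem_append.1 hr with hr | hr
    · rcases List.mem_map.1 hr with ⟨q, _, rfl⟩; exact ⟨i, q, rfl, le_rfl⟩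
    · rcases ih _ r hr with ⟨j, q, rfl, hj⟩; exact ⟨j, q, rfl, by omega⟩

theorem countP_nil_positions (T : OTree) :
    T.positions.countP (fun r => decide (r = [])) = 1 := by
  cases T with | node ts =>
  rw [positions, List.countP_cons]
  have h2 : (posList ts 0).countP (fun r => decide (r = [])) = 0 := by
    rw [List.countP_eq_zero]
    intro r hr
    simpa using posList_ne_nil ts 0 r hr
  rw [h2]
  norm_num

theorem length_posList : ∀ (ts : List OTree) (i : ℕ),
    (posList ts i).length = (ts.map size).sum := by
  intro ts
  induction ts with
  | nil => intro i; simp [posList]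
  | cons t ts ih =>
    intro i
    rw [posList]
    simp [ih, size]

theorem size_node (ts : List OTree) : size (node ts) = 1 + (ts.map size).sum := by
  rw [size, positions]
  simp [length_posList, Nat.add_comm]

theorem size_pos (T : OTree) : 1 ≤ size T := by
  cases T with | node ts => rw [size_node]; omega

theorem childCount_eq_countP (T : OTree) (q : List ℕ) :
    childCount T q = T.positions.countP (fun r => decide (r ≠ [] ∧ r.dropLast = q)) := by
  rw [childCount, List.countP_eq_length_filter]

theorem dropLast_cons_eq_nil (i : ℕ) (q : List ℕ) :
    (i :: q).dropLast = [] ↔ q = [] := by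
  cases q <;> simp

theorem dropLast_cons_eq_cons (i j : ℕ) (r q : List ℕ) :
    (i :: r).dropLast = j :: q ↔ i = j ∧ r ≠ [] ∧ r.dropLast = q := by
  cases r with
  | nil => simp
  | cons a l => simp [List.dropLast_cons₂, and_assoc]

theorem countP_root_posList : ∀ (ts : List OTree) (i : ℕ),
    (posList ts i).countP (fun r => decide (r ≠ [] ∧ r.dropLast = [])) = ts.length := by
  intro ts
  induction ts with
  | nil => intro i; simp [posList]
  | cons t ts ih =>
    intro i
    rw [posList, List.countP_append, List.countP_map, ih]
    have h1 : ((fun r => decide (r ≠ [] ∧ r.dropLast = [])) ∘ (fun q => (i : ℕ) :: q))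
        = fun q => decide (q = []) := by
      funext q
      simp [Function.comp, dropLast_cons_eq_nil]
    rw [h1, countP_nil_positions]
    simp [Nat.add_comm]

theorem rootDeg_node (ts : List OTree) : childCount (node ts) [] = ts.length := by
  rw [childCount_eq_countP, positions, List.countP_cons, countP_root_posList]
  norm_num

theorem countP_ccP_zero : ∀ (ts : List OTree) (i j : ℕ) (q : List ℕ), j < i →
    (posList ts i).countP (fun r => decide (r ≠ [] ∧ r.dropLast = j :: q)) = 0 := by
  intro ts i j q hj
  rw [List.countP_eq_zero]
  intro r hr
  rcases posList_head ts i r hr with ⟨j', q', rfl, hj'⟩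
  simp only [ne_eq, decide_eq_true_eq, not_and]
  intro _
  rw [dropLast_cons_eq_cons]
  rintro ⟨rfl, -, -⟩
  omega

theorem countP_ccP_posList : ∀ (ts : List OTree) (i m : ℕ) (q : List ℕ) (hm : m < ts.length),
    (posList ts i).countP (fun r => decide (r ≠ [] ∧ r.dropLast = (i + m) :: q))
      = childCount (ts.get ⟨m, hm⟩) q := by
  intro ts
  induction ts with
  | nil => intro i m q hm; simp at hm
  | cons t ts ih =>
    intro i m q hm
    rw [posList, List.countP_append, List.countP_map]
    cases m with
    | zero =>
      have h1 : ((fun r => decide (r ≠ [] ∧ r.dropLast = (i + 0) :: q)) ∘ (fun q' => (i : ℕ) :: q'))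
          = fun r => decide (r ≠ [] ∧ r.dropLast = q) := by
        funext r
        simp [Function.comp, dropLast_cons_eq_cons]
      rw [h1]
      have h2 : (posList ts (i+1)).countP
          (fun r => decide (r ≠ [] ∧ r.dropLast = (i + 0) :: q)) = 0 :=
        countP_ccP_zero ts (i+1) (i+0) q (by omega)
      rw [h2, ← childCount_eq_countP]
      simp [List.get]
    | succ m' =>
      have h1 : ((fun r => decide (r ≠ [] ∧ r.dropLast = (i + (m' + 1)) :: q)) ∘ (fun q' => (i : ℕ) :: q'))
          = fun _ => false := by
        funext r
        simp only [Function.comp, decide_eq_false_iff_not, not_and]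
        intro _
        rw [dropLast_cons_eq_cons]
        rintro ⟨h, -, -⟩
        omega
      rw [h1]
      have h3 : i + (m' + 1) = (i + 1) + m' := by omega
      rw [h3, ih (i+1) m' q (by simpa using hm)]
      simp [List.get]

theorem childCount_node_cons (ts : List OTree) (m : ℕ) (q : List ℕ) (hm : m < ts.length) :
    childCount (node ts) (m :: q) = childCount (ts.get ⟨m, hm⟩) q := by
  rw [childCount_eq_countP, positions, List.countP_cons]
  have h1 := countP_ccP_posList ts 0 m q hm
  rw [Nat.zero_add] at h1
  rw [h1]
  norm_num

theorem prod_posList_weight (p : ℕ → ℝ) :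
    ∀ (ts : List OTree) (i : ℕ) (c : List ℕ → ℕ),
      (∀ (m : ℕ) (hm : m < ts.length), ∀ q' ∈ (ts.get ⟨m, hm⟩).positions,
        c ((i + m) :: q') = childCount (ts.get ⟨m, hm⟩) q') →
      ((posList ts i).map (fun r => p (c r))).prod = (ts.map (gwWeight p)).prod := by
  intro ts
  induction ts with
  | nil => intro i c _; simp [posList]
  | cons t ts ih =>
    intro i c hc
    rw [posList, List.map_append, List.prod_append, List.map_map]
    have h1 : ((t :: ts).map (gwWeight p)).prod = gwWeight p t * (ts.map (gwWeight p)).prod := by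
      simp
    rw [h1]
    congr 1
    · rw [gwWeight]
      congr 1
      apply List.map_congr_left
      intro q hq
      have h0 : (0 : ℕ) < (t :: ts).length := by simp
      have := hc 0 h0 q (by simpa [List.get] using hq)
      rw [Nat.add_zero] at this
      have h3 : c (i :: q) = t.childCount q := by simpa [List.get] using this
      simp [Function.comp, h3]
    · apply ih (i+1) c
      intro m hm q' hq'
      have h2 : (i + 1) + m = i + (m + 1) := by omega
      rw [h2]
      exact hc (m+1) (by simpa using hm) q' hq'

end OTree
namespace OTree

theorem gwWeight_node (p : ℕ → ℝ) (ts : List OTree) :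
    gwWeight p (node ts) = p ts.length * (ts.map (gwWeight p)).prod := by
  rw [gwWeight, positions, List.map_cons, List.prod_cons, rootDeg_node]
  congr 1
  apply prod_posList_weight p ts 0 (childCount (node ts))
  intro m hm q' _
  rw [Nat.zero_add]
  exact childCount_node_cons ts m q' hm

theorem gwWeight_nonneg (p : ℕ → ℝ) (hp : ∀ k, 0 ≤ p k) (T : OTree) : 0 ≤ gwWeight p T := by
  rw [gwWeight]
  apply List.prod_nonneg
  intro a ha
  rcases List.mem_map.1 ha with ⟨q, -, rfl⟩
  exact hp _

end OTree

theorem sum_posList_pow (x : ℂ) : ∀ (ts : List OTree) (i : ℕ),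
    ((OTree.posList ts i).map (fun r => x ^ r.length)).sum
      = x * (ts.map (fun t => Pfun t x)).sum := by
  intro ts
  induction ts with
  | nil => intro i; simp [OTree.posList]
  | cons t ts ih =>
    intro i
    rw [OTree.posList, List.map_append, List.sum_append, List.map_map, ih]
    rw [List.map_cons, List.sum_cons, mul_add]
    congr 1
    have h1 : ((fun (r : List ℕ) => x ^ r.length) ∘ (fun q => (i : ℕ) :: q))
        = fun (q : List ℕ) => x * x ^ q.length := by
      funext q
      simp [Function.comp, pow_succ, mul_comm]
    rw [h1, Pfun]
    induction t.positions with
    | nil => simp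
    | cons a l ihl => simp [List.map_cons, List.sum_cons, mul_add, ihl]

theorem Pfun_node (ts : List OTree) (x : ℂ) :
    Pfun (OTree.node ts) x = 1 + x * (ts.map (fun t => Pfun t x)).sum := by
  rw [Pfun, OTree.positions, List.map_cons, List.sum_cons, sum_posList_pow]
  simp

theorem norm_Pfun_le {x : ℂ} (hx : ‖x‖ ≤ 1) (T : OTree) : ‖Pfun T x‖ ≤ (T.size : ℝ) := by
  rw [Pfun, OTree.size]
  induction T.positions with
  | nil => simp
  | cons q l ih =>
    rw [List.map_cons, List.sum_cons, List.length_cons]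
    calc ‖x ^ q.length + (l.map (fun q => x ^ q.length)).sum‖
        ≤ ‖x ^ q.length‖ + ‖(l.map (fun q => x ^ q.length)).sum‖ := norm_add_le _ _
      _ ≤ 1 + l.length := by
          gcongr
          rw [norm_pow]; exact pow_le_one₀ (norm_nonneg x) hx
      _ = ((l.length + 1 : ℕ) : ℝ) := by push_cast; ring
instance : Inhabited OTree := ⟨OTree.node []⟩

open OTree

theorem summable_p {p : ℕ → ℝ} (hpsum : ∑' k, p k = 1) : Summable p := by
  by_contra h
  rw [tsum_eq_zero_of_not_summable h] at hpsum
  norm_num at hpsum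

theorem p_le_one {p : ℕ → ℝ} (hp : ∀ k, 0 ≤ p k) (hpsum : ∑' k, p k = 1) (k : ℕ) : p k ≤ 1 := by
  have := Summable.le_tsum (summable_p hpsum) k (fun j _ => hp j)
  rw [hpsum] at this
  exact this

theorem prod_weight_pow (p : ℕ → ℝ) (ρ : ℝ) : ∀ (ts : List OTree),
    (ts.map (gwWeight p)).prod * ρ ^ ((ts.map size).sum)
      = (ts.map (fun t => gwWeight p t * ρ ^ size t)).prod := by
  intro ts
  induction ts with
  | nil => simp
  | cons t ts ih => simp only [List.map_cons, List.prod_cons, List.sum_cons, pow_add]; rw [← ih]; ring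

theorem f_node (p : ℕ → ℝ) (ρ : ℝ) (ts : List OTree) :
    gwWeight p (node ts) * ρ ^ size (node ts)
      = p ts.length * ρ * (ts.map (fun t => gwWeight p t * ρ ^ size t)).prod := by
  rw [gwWeight_node, size_node, pow_add, pow_one, ← prod_weight_pow]
  ring

theorem unnode_inj : Function.Injective unnode := by
  intro a b hab
  cases a; cases b; simpa [unnode] using hab

/-- sub-lemma: finite sums over sets of k-lists are bounded by `c^k` -/
theorem finset_list_prod_le (f : OTree → ℝ) (hf : ∀ T, 0 ≤ f T) (Pred : OTree → Prop)
    (c : ℝ) (hc0 : 0 ≤ c)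
    (hS : ∀ S : Finset OTree, (∀ T ∈ S, Pred T) → ∑ T ∈ S, f T ≤ c) :
    ∀ (k : ℕ) (L : Finset (List OTree)), (∀ ts ∈ L, ts.length = k) →
      (∀ ts ∈ L, ∀ t ∈ ts, Pred t) →
      ∑ ts ∈ L, (ts.map f).prod ≤ c ^ k := by
  classical
  intro k
  induction k with
  | zero =>
    intro L hlen _
    have hsub : L ⊆ {[]} := by
      intro ts hts
      have := hlen ts hts
      rw [List.length_eq_zero_iff] at this
      simp [this]
    calc ∑ ts ∈ L, (ts.map f).prod ≤ ∑ ts ∈ ({[]} : Finset (List OTree)), (ts.map f).prod := by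
          apply Finset.sum_le_sum_of_subset_of_nonneg hsub
          intro ts _ _
          apply List.prod_nonneg
          intro a ha
          rcases List.mem_map.1 ha with ⟨t, -, rfl⟩
          exact hf t
      _ = 1 := by simp
      _ = c ^ 0 := by simp
  | succ k ih =>
    intro L hlen hmem
    have hcons : ∀ ts ∈ L, ts = ts.headI :: ts.tail := by
      intro ts hts
      cases ts with
      | nil => have := hlen [] hts; simp at this
      | cons a l => rfl
    set e : List OTree → OTree × List OTree := fun ts => (ts.headI, ts.tail) with he
    have hinj : Set.InjOn e L := by
      intro a ha b hb hab
      have ha' := hcons a ha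
      have hb' := hcons b hb
      rw [ha', hb']
      simp only [he, Prod.mk.injEq] at hab
      rw [hab.1, hab.2]
    have hsum : ∑ ts ∈ L, (ts.map f).prod
        = ∑ pr ∈ L.image e, f pr.1 * (pr.2.map f).prod := by
      rw [Finset.sum_image hinj]
      apply Finset.sum_congr rfl
      intro ts hts
      conv_lhs => rw [hcons ts hts]
      simp [he]
    rw [hsum]
    have hsub : L.image e ⊆ (L.image (fun ts => ts.headI)) ×ˢ (L.image List.tail) := by
      intro pr hpr
      rcases Finset.mem_image.1 hpr with ⟨ts, hts, rfl⟩
      exact Finset.mem_product.2 ⟨Finset.mem_image_of_mem _ hts, Finset.mem_image_of_mem _ hts⟩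
    calc ∑ pr ∈ L.image e, f pr.1 * (pr.2.map f).prod
        ≤ ∑ pr ∈ (L.image (fun ts => ts.headI)) ×ˢ (L.image List.tail), f pr.1 * (pr.2.map f).prod := by
          apply Finset.sum_le_sum_of_subset_of_nonneg hsub
          intro pr _ _
          apply mul_nonneg (hf _)
          apply List.prod_nonneg
          intro a ha
          rcases List.mem_map.1 ha with ⟨t, -, rfl⟩
          exact hf t
      _ = (∑ h ∈ L.image (fun ts => ts.headI), f h) * (∑ tl ∈ L.image List.tail, (tl.map f).prod) := by
          rw [Finset.sum_product]
          exact (Finset.sum_mul_sum (L.image (fun ts => ts.headI)) (L.image List.tail) f (fun tl => (tl.map f).prod)).symm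
      _ ≤ c * c ^ k := by
          apply mul_le_mul
          · apply hS
            intro T hT
            rcases Finset.mem_image.1 hT with ⟨ts, hts, rfl⟩
            apply hmem ts hts
            have h := hcons ts hts
            have h2 : ts.headI ∈ ts.headI :: ts.tail := List.mem_cons_self
            rwa [← h] at h2
          · apply ih
            · intro tl htl
              rcases Finset.mem_image.1 htl with ⟨ts, hts, rfl⟩
              have := hlen ts hts
              have h2 := hcons ts hts
              rw [h2] at this
              simpa using this
            · intro tl htl t ht
              rcases Finset.mem_image.1 htl with ⟨ts, hts, rfl⟩
              apply hmem ts hts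
              exact List.mem_of_mem_tail ht
          · apply Finset.sum_nonneg
            intro tl _
            apply List.prod_nonneg
            intro a ha
            rcases List.mem_map.1 ha with ⟨t, -, rfl⟩
            exact hf t
          · exact hc0
      _ = c ^ (k+1) := by ring

theorem size_mem_le (t : OTree) (ts : List OTree) (ht : t ∈ ts) :
    size t ≤ (ts.map size).sum :=
  List.single_le_sum (by intro a _; exact Nat.zero_le a) _ (List.mem_map_of_mem ht)

/-- key bound: all finite partial sums of `w(T) ρ^{|T|}` are at most `ρ` -/
theorem sum_f_le (p : ℕ → ℝ) (hp : ∀ k, 0 ≤ p k) (hpsum : ∑' k, p k = 1)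
    {ρ : ℝ} (hρ0 : 0 ≤ ρ) (hρ1 : ρ ≤ 1) :
    ∀ (N : ℕ) (S : Finset OTree), (∀ T ∈ S, size T ≤ N) →
      ∑ T ∈ S, gwWeight p T * ρ ^ size T ≤ ρ := by
  classical
  intro N
  induction N with
  | zero =>
    intro S hS
    have : S = ∅ := by
      apply Finset.eq_empty_of_forall_notMem
      intro T hT
      have := hS T hT
      have := size_pos T
      omega
    simp [this, hρ0]
  | succ N ihN =>
    intro S hS
    set f : OTree → ℝ := fun T => gwWeight p T * ρ ^ size T with hf
    have hf0 : ∀ T, 0 ≤ f T := fun T => mul_nonneg (gwWeight_nonneg p hp T) (pow_nonneg hρ0 _)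
    have h1 : ∑ T ∈ S, f T = ∑ ts ∈ S.image unnode, f (node ts) := by
      rw [Finset.sum_image (fun a ha b hb hab => unnode_inj hab)]
      apply Finset.sum_congr rfl
      intro T hT
      cases T
      rfl
    rw [h1]
    set L := S.image unnode with hL
    have hLmem : ∀ ts ∈ L, ∀ t ∈ ts, size t ≤ N := by
      intro ts hts t ht
      rcases Finset.mem_image.1 hts with ⟨T, hT, rfl⟩
      have hTS := hS T hT
      cases T with | node l =>
      rw [size_node] at hTS
      have := size_mem_le t l ht
      simp only [unnode] at ht
      have := size_mem_le t l ht
      omega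
    -- group by length
    have h2 : ∑ ts ∈ L, f (node ts)
        = ∑ k ∈ L.image List.length, ∑ ts ∈ L.filter (fun ts => ts.length = k), f (node ts) := by
      rw [Finset.sum_fiberwise_of_maps_to]
      intro ts hts
      exact Finset.mem_image_of_mem _ hts
    rw [h2]
    have h3 : ∀ k ∈ L.image List.length,
        ∑ ts ∈ L.filter (fun ts => ts.length = k), f (node ts) ≤ p k * ρ := by
      intro k _
      have : ∀ ts ∈ L.filter (fun ts => ts.length = k),
          f (node ts) = p k * ρ * (ts.map f).prod := by
        intro ts hts
        rcases Finset.mem_filter.1 hts with ⟨-, rfl⟩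
        exact f_node p ρ ts
      rw [Finset.sum_congr rfl this, ← Finset.mul_sum]
      have hb : ∑ ts ∈ L.filter (fun ts => ts.length = k), (ts.map f).prod ≤ ρ ^ k := by
        apply finset_list_prod_le f hf0 (fun T => size T ≤ N) ρ hρ0
        · intro S' hS'
          exact ihN S' hS'
        · intro ts hts; exact (Finset.mem_filter.1 hts).2
        · intro ts hts t ht
          exact hLmem ts (Finset.mem_filter.1 hts).1 t ht
      calc p k * ρ * ∑ ts ∈ L.filter (fun ts => ts.length = k), (ts.map f).prod
          ≤ p k * ρ * ρ ^ k := by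
            apply mul_le_mul_of_nonneg_left hb (mul_nonneg (hp k) hρ0)
        _ ≤ p k * ρ * 1 := by
            apply mul_le_mul_of_nonneg_left (pow_le_one₀ hρ0 hρ1) (mul_nonneg (hp k) hρ0)
        _ = p k * ρ := by ring
    calc ∑ k ∈ L.image List.length, ∑ ts ∈ L.filter (fun ts => ts.length = k), f (node ts)
        ≤ ∑ k ∈ L.image List.length, p k * ρ := Finset.sum_le_sum h3
      _ = (∑ k ∈ L.image List.length, p k) * ρ := by rw [Finset.sum_mul]
      _ ≤ 1 * ρ := by
          apply mul_le_mul_of_nonneg_right _ hρ0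
          rw [← hpsum]
          exact Summable.sum_le_tsum _ (fun k _ => hp k) (summable_p hpsum)
      _ = ρ := by ring

theorem summable_w_rho (p : ℕ → ℝ) (hp : ∀ k, 0 ≤ p k) (hpsum : ∑' k, p k = 1)
    {ρ : ℝ} (hρ0 : 0 ≤ ρ) (hρ1 : ρ ≤ 1) :
    Summable (fun T => gwWeight p T * ρ ^ size T) := by
  apply summable_of_sum_le (fun T => mul_nonneg (gwWeight_nonneg p hp T) (pow_nonneg hρ0 _))
  intro u
  exact sum_f_le p hp hpsum hρ0 hρ1 (u.sup size) u (fun T hT => Finset.le_sup hT)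

theorem tsum_w_rho_le (p : ℕ → ℝ) (hp : ∀ k, 0 ≤ p k) (hpsum : ∑' k, p k = 1)
    {ρ : ℝ} (hρ0 : 0 ≤ ρ) (hρ1 : ρ ≤ 1) :
    ∑' T, gwWeight p T * ρ ^ size T ≤ ρ :=
  Summable.tsum_le_of_sum_le (summable_w_rho p hp hpsum hρ0 hρ1)
    (fun u => sum_f_le p hp hpsum hρ0 hρ1 (u.sup size) u (fun T hT => Finset.le_sup hT))

/-- summability with polynomial size weights -/
theorem summable_w_rho_pow (p : ℕ → ℝ) (hp : ∀ k, 0 ≤ p k) (hpsum : ∑' k, p k = 1)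
    {ρ : ℝ} (hρ0 : 0 ≤ ρ) (hρ1 : ρ < 1) (j : ℕ) :
    Summable (fun T => gwWeight p T * (size T : ℝ) ^ j * ρ ^ size T) := by
  set ρ' : ℝ := (1 + ρ) / 2 with hρ'
  have hρ'0 : 0 < ρ' := by rw [hρ']; linarith
  have hρ'1 : ρ' < 1 := by rw [hρ']; linarith
  have hlt : ρ < ρ' := by rw [hρ']; linarith
  set s : ℝ := ρ / ρ' with hs
  have hs0 : 0 ≤ s := div_nonneg hρ0 hρ'0.le
  have hs1 : s < 1 := by
    rw [hs, div_lt_one hρ'0]; exact hlt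
  have hgeom : Summable (fun n : ℕ => (n : ℝ) ^ j * s ^ n) :=
    summable_pow_mul_geometric_of_norm_lt_one j (by rwa [Real.norm_eq_abs, abs_of_nonneg hs0])
  set M : ℝ := ∑' n : ℕ, (n : ℝ) ^ j * s ^ n with hM
  have hbound : ∀ n : ℕ, (n : ℝ) ^ j * s ^ n ≤ M := by
    intro n
    exact Summable.le_tsum hgeom n (fun m _ => mul_nonneg (pow_nonneg (Nat.cast_nonneg m) _) (pow_nonneg hs0 _))
  have hnn : ∀ T, 0 ≤ gwWeight p T * (size T : ℝ) ^ j * ρ ^ size T :=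
    fun T => mul_nonneg (mul_nonneg (gwWeight_nonneg p hp T) (pow_nonneg (Nat.cast_nonneg _) _)) (pow_nonneg hρ0 _)
  have hsum' : Summable (fun T => M * (gwWeight p T * ρ' ^ size T)) :=
    (summable_w_rho p hp hpsum hρ'0.le hρ'1.le).mul_left M
  apply Summable.of_nonneg_of_le hnn _ hsum'
  · intro T
    have key : (size T : ℝ) ^ j * ρ ^ size T ≤ M * ρ' ^ size T := by
      have h1 : ρ ^ size T = s ^ size T * ρ' ^ size T := by
        rw [← mul_pow, hs, div_mul_cancel₀]
        exact ne_of_gt hρ'0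
      rw [h1, ← mul_assoc]
      apply mul_le_mul_of_nonneg_right _ (pow_nonneg hρ'0.le _)
      exact hbound (size T)
    calc gwWeight p T * (size T : ℝ) ^ j * ρ ^ size T
        = gwWeight p T * ((size T : ℝ) ^ j * ρ ^ size T) := by ring
      _ ≤ gwWeight p T * (M * ρ' ^ size T) := by
          apply mul_le_mul_of_nonneg_left key (gwWeight_nonneg p hp T)
      _ = M * (gwWeight p T * ρ' ^ size T) := by ring
open OTree
noncomputable def gg (p : ℕ → ℝ) (z : ℂ) (T : OTree) : ℂ := (gwWeight p T : ℂ) * z ^ T.size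

theorem norm_gg (p : ℕ → ℝ) (hp : ∀ k, 0 ≤ p k) (z : ℂ) (T : OTree) :
    ‖gg p z T‖ = gwWeight p T * ‖z‖ ^ T.size := by
  rw [gg, norm_mul, norm_pow, Complex.norm_real, Real.norm_eq_abs, abs_of_nonneg (gwWeight_nonneg p hp T)]

theorem summable_norm_ggP (p : ℕ → ℝ) (hp : ∀ k, 0 ≤ p k) (hpsum : ∑' k, p k = 1)
    {z x : ℂ} (hz : ‖z‖ < 1) (hx : ‖x‖ ≤ 1) :
    Summable (fun T => ‖gg p z T * Pfun T x‖) := by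
  have hnn : ∀ T : OTree, 0 ≤ ‖gg p z T * Pfun T x‖ := fun T => norm_nonneg _
  have hbig : Summable (fun T : OTree => gwWeight p T * (T.size : ℝ) ^ 1 * ‖z‖ ^ T.size) :=
    summable_w_rho_pow p hp hpsum (norm_nonneg z) hz 1
  apply Summable.of_nonneg_of_le hnn _ hbig
  intro T
  rw [norm_mul, norm_gg p hp, pow_one]
  calc gwWeight p T * ‖z‖ ^ T.size * ‖Pfun T x‖
      ≤ gwWeight p T * ‖z‖ ^ T.size * (T.size : ℝ) := by
        apply mul_le_mul_of_nonneg_left (norm_Pfun_le hx T)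
          (mul_nonneg (gwWeight_nonneg p hp T) (pow_nonneg (norm_nonneg z) _))
    _ = gwWeight p T * (T.size : ℝ) * ‖z‖ ^ T.size := by ring

theorem summable_norm_ggPP (p : ℕ → ℝ) (hp : ∀ k, 0 ≤ p k) (hpsum : ∑' k, p k = 1)
    {z x y : ℂ} (hz : ‖z‖ < 1) (hx : ‖x‖ ≤ 1) (hy : ‖y‖ ≤ 1) :
    Summable (fun T => ‖gg p z T * Pfun T x * Pfun T y‖) := by
  have hnn : ∀ T : OTree, 0 ≤ ‖gg p z T * Pfun T x * Pfun T y‖ := fun T => norm_nonneg _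
  have hbig : Summable (fun T : OTree => gwWeight p T * (T.size : ℝ) ^ 2 * ‖z‖ ^ T.size) :=
    summable_w_rho_pow p hp hpsum (norm_nonneg z) hz 2
  apply Summable.of_nonneg_of_le hnn _ hbig
  intro T
  rw [norm_mul, norm_mul, norm_gg p hp]
  have h1 : ‖Pfun T x‖ ≤ (T.size : ℝ) := norm_Pfun_le hx T
  have h2 : ‖Pfun T y‖ ≤ (T.size : ℝ) := norm_Pfun_le hy T
  have hn : (0:ℝ) ≤ (T.size : ℝ) := Nat.cast_nonneg _
  calc gwWeight p T * ‖z‖ ^ T.size * ‖Pfun T x‖ * ‖Pfun T y‖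
      ≤ gwWeight p T * ‖z‖ ^ T.size * (T.size : ℝ) * (T.size : ℝ) := by
        apply mul_le_mul (mul_le_mul_of_nonneg_left h1
          (mul_nonneg (gwWeight_nonneg p hp T) (pow_nonneg (norm_nonneg z) _))) h2 (norm_nonneg _)
        exact mul_nonneg (mul_nonneg (gwWeight_nonneg p hp T) (pow_nonneg (norm_nonneg z) _)) hn
    _ = gwWeight p T * (T.size : ℝ) ^ 2 * ‖z‖ ^ T.size := by ring
open OTree
theorem tsum_pi_prod : ∀ {n : ℕ} (h : Fin n → OTree → ℂ),
    (∀ i, Summable (fun t => ‖h i t‖)) →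
    Summable (fun v : Fin n → OTree => ‖∏ i, h i (v i)‖) ∧
      (∑' v : Fin n → OTree, ∏ i, h i (v i)) = ∏ i, ∑' t, h i t := by
  intro n
  induction n with
  | zero =>
    intro h _
    constructor
    · exact .of_finite
    · have h1 : ∀ v : Fin 0 → OTree, (∏ i, h i (v i)) = 1 := by intro v; simp
      rw [tsum_congr h1, tsum_eq_single default (fun v hv => absurd (Subsingleton.elim v default) hv)]
      simp
  | succ n ih =>
    intro h hs
    obtain ⟨S1, E1⟩ := ih (fun i => h i.succ) (fun i => hs i.succ)
    set e : (Fin (n+1) → OTree) ≃ OTree × (Fin n → OTree) := (Fin.consEquiv fun _ => OTree).symm with he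
    have hfe : ∀ v : Fin (n+1) → OTree,
        (∏ i, h i (v i)) = h 0 (v 0) * ∏ i : Fin n, h i.succ (v i.succ) :=
      fun v => Fin.prod_univ_succ (fun i => h i (v i))
    have S1' : Summable (fun w : Fin n → OTree => ‖∏ i : Fin n, h i.succ (w i)‖) := S1
    have Spair : Summable (fun pr : OTree × (Fin n → OTree) =>
        ‖h 0 pr.1 * ∏ i : Fin n, h i.succ (pr.2 i)‖) :=
      Summable.mul_norm (f := h 0) (g := fun w : Fin n → OTree => ∏ i : Fin n, h i.succ (w i)) (hs 0) S1'
    have hcomp : (fun v : Fin (n+1) → OTree => ‖∏ i, h i (v i)‖)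
        = (fun pr : OTree × (Fin n → OTree) => ‖h 0 pr.1 * ∏ i : Fin n, h i.succ (pr.2 i)‖) ∘ e := by
      funext v
      simp only [Function.comp]
      rw [hfe v]
      rfl
    constructor
    · rw [hcomp]
      exact (Equiv.summable_iff e).mpr Spair
    · have key : ∀ pr : OTree × (Fin n → OTree),
          (∏ i, h i (e.symm pr i)) = h 0 pr.1 * ∏ i : Fin n, h i.succ (pr.2 i) := by
        intro pr
        rw [hfe (e.symm pr)]
        rfl
      rw [← Equiv.tsum_eq e.symm (fun v => ∏ i, h i (v i)), tsum_congr key,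
        ← tsum_mul_tsum_of_summable_norm (hs 0) S1', E1, Fin.prod_univ_succ]

theorem prod_ite_point {M : Type*} [CommMonoid M] {n : ℕ} (i : Fin n) (F G : Fin n → M) :
    (∏ j, (if j = i then F j else G j)) = F i * ∏ j ∈ Finset.univ.erase i, G j := by
  rw [← Finset.mul_prod_erase Finset.univ _ (Finset.mem_univ i)]
  simp only [if_pos rfl]
  congr 1
  apply Finset.prod_congr rfl
  intro j hj
  rw [if_neg (Finset.ne_of_mem_erase hj)]

theorem prod_ite_point2 {M : Type*} [CommMonoid M] {n : ℕ} {i j : Fin n} (hij : j ≠ i)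
    (F G H : Fin n → M) :
    (∏ l, (if l = i then F l else if l = j then G l else H l))
      = F i * (G j * ∏ l ∈ (Finset.univ.erase i).erase j, H l) := by
  rw [← Finset.mul_prod_erase Finset.univ _ (Finset.mem_univ i)]
  simp only [if_pos rfl]
  congr 1
  have hj : j ∈ Finset.univ.erase i := Finset.mem_erase.2 ⟨hij, Finset.mem_univ j⟩
  rw [← Finset.mul_prod_erase _ _ hj]
  rw [if_neg hij, if_pos rfl]
  congr 1
  apply Finset.prod_congr rfl
  intro l hl
  have hl1 := Finset.ne_of_mem_erase hl
  have hl2 := Finset.ne_of_mem_erase (Finset.mem_of_mem_erase hl)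
  rw [if_neg hl2, if_neg hl1]

noncomputable def treeSigma : OTree ≃ Σ n : ℕ, (Fin n → OTree) :=
  OTree.eqList.trans List.equivSigmaTuple

theorem treeSigma_symm (n : ℕ) (v : Fin n → OTree) :
    treeSigma.symm ⟨n, v⟩ = OTree.node (List.ofFn v) := by
  simp [treeSigma, OTree.eqList, List.equivSigmaTuple]
  rfl

theorem summable_fiber_norm (f : OTree → ℂ) (hf : Summable (fun T => ‖f T‖)) (n : ℕ) :
    Summable (fun v : Fin n → OTree => ‖f (OTree.node (List.ofFn v))‖) := by
  have hsig : Summable (fun σ : Σ n : ℕ, (Fin n → OTree) => ‖f (treeSigma.symm σ)‖) :=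
    treeSigma.symm.summable_iff.mpr hf
  have := hsig.comp_injective (sigma_mk_injective (i := n))
  apply this.congr
  intro v
  simp only [Function.comp]
  rw [treeSigma_symm]


theorem tsum_tree (f : OTree → ℂ) (hf : Summable (fun T => ‖f T‖)) :
    ∑' T, f T = ∑' n : ℕ, ∑' v : Fin n → OTree, f (OTree.node (List.ofFn v)) := by
  have hsig : Summable (fun σ : Σ n : ℕ, (Fin n → OTree) => ‖f (treeSigma.symm σ)‖) :=
    treeSigma.symm.summable_iff.mpr hf
  have hsig' : Summable (fun σ : Σ n : ℕ, (Fin n → OTree) => f (treeSigma.symm σ)) :=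
    hsig.of_norm
  have hfib : ∀ n : ℕ, Summable (fun v : Fin n → OTree => f (treeSigma.symm ⟨n, v⟩)) :=
    fun n => hsig'.comp_injective sigma_mk_injective
  have e1 : ∑' T, f T = ∑' σ : Σ n : ℕ, (Fin n → OTree), f (treeSigma.symm σ) :=
    (Equiv.tsum_eq treeSigma.symm f).symm
  have e2 := Summable.tsum_sigma' (f := fun σ : (Σ n : ℕ, (Fin n → OTree)) => f (treeSigma.symm σ)) hfib hsig'
  rw [e1, e2]
  apply tsum_congr; intro n
  apply tsum_congr; intro v
  exact congrArg f (treeSigma_symm n v)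

open OTree

noncomputable def bbf (p : ℕ → ℝ) (z x : ℂ) (t : OTree) : ℂ := gg p z t * Pfun t x
noncomputable def ccf (p : ℕ → ℝ) (z x y : ℂ) (t : OTree) : ℂ := gg p z t * Pfun t x * Pfun t y

theorem Afun_eq (p : ℕ → ℝ) (z : ℂ) : Afun p z = ∑' T, gg p z T := rfl
theorem Bfun_eq (p : ℕ → ℝ) (z x : ℂ) : Bfun p z x = ∑' T, bbf p z x T := rfl
theorem Cfun_eq (p : ℕ → ℝ) (z x y : ℂ) : Cfun p z x y = ∑' T, ccf p z x y T := rfl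

theorem gg_node (p : ℕ → ℝ) (z : ℂ) (n : ℕ) (v : Fin n → OTree) :
    gg p z (node (List.ofFn v)) = (p n : ℂ) * z * ∏ i, gg p z (v i) := by
  rw [gg, gwWeight_node, size_node, List.map_ofFn, List.map_ofFn, List.prod_ofFn, List.sum_ofFn,
    List.length_ofFn]
  push_cast
  rw [pow_add, pow_one, ← Finset.prod_pow_eq_pow_sum]
  have h2 : (∏ i, gg p z (v i)) = (∏ i, ((gwWeight p ∘ v) i : ℂ)) * (∏ i, z ^ (size ∘ v) i) := by
    rw [← Finset.prod_mul_distrib]; rfl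
  rw [h2]
  ring

theorem Pfun_node_fn (n : ℕ) (v : Fin n → OTree) (x : ℂ) :
    Pfun (node (List.ofFn v)) x = 1 + x * ∑ i, Pfun (v i) x := by
  rw [Pfun_node, List.map_ofFn, List.sum_ofFn]
  rfl

theorem mark_point (b g P : OTree → ℂ) (hb : ∀ t, b t = g t * P t) {n : ℕ}
    (v : Fin n → OTree) (i : Fin n) :
    (∏ j, (if j = i then b else g) (v j)) = P (v i) * ∏ j, g (v j) := by
  have h1 : ∀ j : Fin n, (if j = i then b else g) (v j) = if j = i then b (v j) else g (v j) :=
    fun j => apply_ite (fun f : OTree → ℂ => f (v j)) _ _ _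
  rw [Finset.prod_congr rfl (fun j _ => h1 j),
    prod_ite_point i (fun j => b (v j)) (fun j => g (v j)), hb]
  rw [← Finset.mul_prod_erase Finset.univ (fun j => g (v j)) (Finset.mem_univ i)]
  ring

theorem mark2_point (b1 b2 g P1 P2 : OTree → ℂ) (hb1 : ∀ t, b1 t = g t * P1 t)
    (hb2 : ∀ t, b2 t = g t * P2 t) {n : ℕ} (v : Fin n → OTree) {i j : Fin n} (hij : i ≠ j) :
    (∏ l, (if l = i then b1 else if l = j then b2 else g) (v l))
      = P1 (v i) * P2 (v j) * ∏ l, g (v l) := by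
  have h1 : ∀ l : Fin n, (if l = i then b1 else if l = j then b2 else g) (v l)
      = if l = i then b1 (v l) else if l = j then b2 (v l) else g (v l) := by
    intro l
    rw [apply_ite (fun f : OTree → ℂ => f (v l)), apply_ite (fun f : OTree → ℂ => f (v l))]
  rw [Finset.prod_congr rfl (fun l _ => h1 l),
    prod_ite_point2 (Ne.symm hij) (fun l => b1 (v l)) (fun l => b2 (v l)) (fun l => g (v l)),
    hb1, hb2]
  have hj : j ∈ Finset.univ.erase i := Finset.mem_erase.2 ⟨Ne.symm hij, Finset.mem_univ j⟩
  rw [← Finset.mul_prod_erase Finset.univ (fun l => g (v l)) (Finset.mem_univ i),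
    ← Finset.mul_prod_erase (Finset.univ.erase i) (fun l => g (v l)) hj]
  ring

theorem tsum_ite_fun (b g : OTree → ℂ) {n : ℕ} (i j : Fin n) :
    (∑' t, (if j = i then b else g) t) = if j = i then (∑' t, b t) else (∑' t, g t) := by
  by_cases hji : j = i <;> simp [hji]

theorem tsum_mark (b g : OTree → ℂ) (Sb : Summable (fun t => ‖b t‖))
    (Sg : Summable (fun t => ‖g t‖)) (n : ℕ) (i : Fin n) :
    Summable (fun v : Fin n → OTree => ∏ j, (if j = i then b else g) (v j)) ∧
    (∑' v : Fin n → OTree, ∏ j, (if j = i then b else g) (v j))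
      = (∑' t, b t) * (∑' t, g t) ^ (n - 1) := by
  have hs : ∀ j : Fin n, Summable (fun t => ‖(if j = i then b else g) t‖) := by
    intro j; by_cases hji : j = i
    · simpa [hji] using Sb
    · simpa [hji] using Sg
  obtain ⟨S, E⟩ := tsum_pi_prod (fun j => if j = i then b else g) hs
  refine ⟨S.of_norm, ?_⟩
  rw [E, Finset.prod_congr rfl (fun j _ => tsum_ite_fun b g i j),
    prod_ite_point i (fun _ => ∑' t, b t) (fun _ => ∑' t, g t),
    Finset.prod_const, Finset.card_erase_of_mem (Finset.mem_univ i), Finset.card_univ,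
    Fintype.card_fin]

theorem tsum_mark2 (b1 b2 g : OTree → ℂ) (Sb1 : Summable (fun t => ‖b1 t‖))
    (Sb2 : Summable (fun t => ‖b2 t‖)) (Sg : Summable (fun t => ‖g t‖))
    (n : ℕ) {i j : Fin n} (hij : i ≠ j) :
    Summable (fun v : Fin n → OTree => ∏ l, (if l = i then b1 else if l = j then b2 else g) (v l)) ∧
    (∑' v : Fin n → OTree, ∏ l, (if l = i then b1 else if l = j then b2 else g) (v l))
      = (∑' t, b1 t) * ((∑' t, b2 t) * (∑' t, g t) ^ (n - 2)) := by
  have hs : ∀ l : Fin n, Summable (fun t => ‖(if l = i then b1 else if l = j then b2 else g) t‖) := by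
    intro l
    by_cases hli : l = i
    · simpa [hli] using Sb1
    · by_cases hlj : l = j
      · simpa [hli, hlj, Ne.symm hij] using Sb2
      · simpa [hli, hlj] using Sg
  obtain ⟨S, E⟩ := tsum_pi_prod (fun l => if l = i then b1 else if l = j then b2 else g) hs
  refine ⟨S.of_norm, ?_⟩
  have hval : ∀ l : Fin n, (∑' t, (if l = i then b1 else if l = j then b2 else g) t)
      = if l = i then (∑' t, b1 t) else if l = j then (∑' t, b2 t) else (∑' t, g t) := by
    intro l
    by_cases hli : l = i
    · simp [hli]
    · by_cases hlj : l = j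
      · simp [hli, hlj, Ne.symm hij]
      · simp [hli, hlj]
  rw [E, Finset.prod_congr rfl (fun l _ => hval l),
    prod_ite_point2 (Ne.symm hij) (fun _ => ∑' t, b1 t) (fun _ => ∑' t, b2 t) (fun _ => ∑' t, g t),
    Finset.prod_const, Finset.card_erase_of_mem
      (Finset.mem_erase.2 ⟨Ne.symm hij, Finset.mem_univ j⟩),
    Finset.card_erase_of_mem (Finset.mem_univ i), Finset.card_univ, Fintype.card_fin]
  rw [show (n - 1 - 1 : ℕ) = n - 2 by omega]

theorem summable_norm_gg (p : ℕ → ℝ) (hp : ∀ k, 0 ≤ p k) (hpsum : ∑' k, p k = 1)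
    {z : ℂ} (hz : ‖z‖ < 1) : Summable (fun T => ‖gg p z T‖) := by
  have := summable_w_rho p hp hpsum (norm_nonneg z) hz.le
  apply this.congr
  intro T
  rw [norm_gg p hp]

theorem norm_Afun_le (p : ℕ → ℝ) (hp : ∀ k, 0 ≤ p k) (hpsum : ∑' k, p k = 1)
    {z : ℂ} (hz : ‖z‖ < 1) : ‖Afun p z‖ ≤ ‖z‖ := by
  rw [Afun_eq]
  calc ‖∑' T, gg p z T‖ ≤ ∑' T, ‖gg p z T‖ :=
        norm_tsum_le_tsum_norm (summable_norm_gg p hp hpsum hz)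
    _ = ∑' T, gwWeight p T * ‖z‖ ^ OTree.size T := tsum_congr (fun T => norm_gg p hp z T)
    _ ≤ ‖z‖ := tsum_w_rho_le p hp hpsum (norm_nonneg z) hz.le

theorem norm_p_le (p : ℕ → ℝ) (hp : ∀ k, 0 ≤ p k) (hpsum : ∑' k, p k = 1) (n : ℕ) :
    ‖(p n : ℂ)‖ ≤ 1 := by
  rw [Complex.norm_real, Real.norm_eq_abs, abs_of_nonneg (hp n)]
  exact p_le_one hp hpsum n

theorem sumF0 (p : ℕ → ℝ) (hp : ∀ k, 0 ≤ p k) (hpsum : ∑' k, p k = 1) (z : ℂ)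
    {A : ℂ} (hA : ‖A‖ < 1) :
    Summable (fun n : ℕ => (p n : ℂ) * z * A ^ n) := by
  apply Summable.of_norm
  have hg : Summable (fun n : ℕ => ‖z‖ * ‖A‖ ^ n) :=
    (summable_geometric_of_lt_one (norm_nonneg A) hA).mul_left _
  apply Summable.of_nonneg_of_le (fun n => norm_nonneg _) _ hg
  intro n
  rw [norm_mul, norm_mul, norm_pow]
  calc ‖(p n : ℂ)‖ * ‖z‖ * ‖A‖ ^ n ≤ 1 * ‖z‖ * ‖A‖ ^ n := by
        apply mul_le_mul_of_nonneg_right (mul_le_mul_of_nonneg_right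
          (norm_p_le p hp hpsum n) (norm_nonneg z)) (pow_nonneg (norm_nonneg A) n)
    _ = ‖z‖ * ‖A‖ ^ n := by ring

theorem sumF1 (p : ℕ → ℝ) (hp : ∀ k, 0 ≤ p k) (hpsum : ∑' k, p k = 1)
    {A : ℂ} (hA : ‖A‖ < 1) :
    Summable (fun n : ℕ => (n : ℂ) * (p n : ℂ) * A ^ (n - 1)) := by
  apply (summable_nat_add_iff 1).1
  apply Summable.of_norm
  have hg : Summable (fun n : ℕ => (n : ℝ) ^ 1 * ‖A‖ ^ n + ‖A‖ ^ n) :=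
    (summable_pow_mul_geometric_of_norm_lt_one 1 (by simpa using hA)).add
      (summable_geometric_of_lt_one (norm_nonneg A) hA)
  apply Summable.of_nonneg_of_le (fun n => norm_nonneg _) _ hg
  intro n
  simp only [Nat.add_sub_cancel]
  rw [norm_mul, norm_mul, norm_pow]
  have h1 : ‖((n + 1 : ℕ) : ℂ)‖ = (n : ℝ) + 1 := by
    rw [Complex.norm_natCast]; push_cast; ring
  rw [h1]
  calc ((n : ℝ) + 1) * ‖(p (n+1) : ℂ)‖ * ‖A‖ ^ n ≤ ((n : ℝ) + 1) * 1 * ‖A‖ ^ n := by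
        apply mul_le_mul_of_nonneg_right (mul_le_mul_of_nonneg_left
          (norm_p_le p hp hpsum (n+1)) (by positivity)) (pow_nonneg (norm_nonneg A) n)
    _ = (n : ℝ) ^ 1 * ‖A‖ ^ n + ‖A‖ ^ n := by ring

theorem sumF2 (p : ℕ → ℝ) (hp : ∀ k, 0 ≤ p k) (hpsum : ∑' k, p k = 1)
    {A : ℂ} (hA : ‖A‖ < 1) :
    Summable (fun n : ℕ => (n : ℂ) * ((n : ℂ) - 1) * (p n : ℂ) * A ^ (n - 2)) := by
  apply (summable_nat_add_iff 2).1
  apply Summable.of_norm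
  have hg : Summable (fun n : ℕ =>
      (n : ℝ) ^ 2 * ‖A‖ ^ n + (3 * ((n : ℝ) ^ 1 * ‖A‖ ^ n) + 2 * ‖A‖ ^ n)) :=
    (summable_pow_mul_geometric_of_norm_lt_one 2 (by simpa using hA)).add
      (((summable_pow_mul_geometric_of_norm_lt_one 1 (r := ‖A‖) (by simpa using hA)).mul_left 3).add
        ((summable_geometric_of_lt_one (norm_nonneg A) hA).mul_left 2))
  apply Summable.of_nonneg_of_le (fun n => norm_nonneg _) _ hg
  intro n
  simp only [Nat.add_sub_cancel]
  rw [norm_mul, norm_mul, norm_mul, norm_pow]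
  have h1 : ‖((n + 2 : ℕ) : ℂ)‖ = (n : ℝ) + 2 := by
    rw [Complex.norm_natCast]; push_cast; ring
  have h2 : ‖((n + 2 : ℕ) : ℂ) - 1‖ = (n : ℝ) + 1 := by
    have : ((n + 2 : ℕ) : ℂ) - 1 = ((n + 1 : ℕ) : ℂ) := by push_cast; ring
    rw [this, Complex.norm_natCast]; push_cast; ring
  rw [h1, h2]
  calc ((n : ℝ) + 2) * ((n : ℝ) + 1) * ‖(p (n+2) : ℂ)‖ * ‖A‖ ^ n
      ≤ ((n : ℝ) + 2) * ((n : ℝ) + 1) * 1 * ‖A‖ ^ n := by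
        apply mul_le_mul_of_nonneg_right (mul_le_mul_of_nonneg_left
          (norm_p_le p hp hpsum (n+2)) (by positivity)) (pow_nonneg (norm_nonneg A) n)
    _ = (n : ℝ) ^ 2 * ‖A‖ ^ n + (3 * ((n : ℝ) ^ 1 * ‖A‖ ^ n) + 2 * ‖A‖ ^ n) := by ring

theorem eqA (p : ℕ → ℝ) (hp : ∀ k, 0 ≤ p k) (hpsum : ∑' k, p k = 1)
    {z : ℂ} (hz : ‖z‖ < 1) :
    Afun p z = ∑' n : ℕ, (p n : ℂ) * z * (Afun p z) ^ n := by
  conv_lhs => rw [Afun_eq]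
  rw [tsum_tree (gg p z) (summable_norm_gg p hp hpsum hz)]
  apply tsum_congr; intro n
  rw [tsum_congr (fun v : Fin n → OTree => gg_node p z n v), tsum_mul_left]
  congr 1
  obtain ⟨S, E⟩ := tsum_pi_prod (fun _ : Fin n => gg p z) (fun _ => summable_norm_gg p hp hpsum hz)
  rw [E, Finset.prod_const, Finset.card_univ, Fintype.card_fin, ← Afun_eq]

theorem eqB (p : ℕ → ℝ) (hp : ∀ k, 0 ≤ p k) (hpsum : ∑' k, p k = 1)
    {z x : ℂ} (hz : ‖z‖ < 1) (hx : ‖x‖ ≤ 1) :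
    Bfun p z x = Afun p z + x * z * PhiD p (Afun p z) * Bfun p z x := by
  have Sg := summable_norm_gg p hp hpsum hz
  have Sb : Summable (fun T => ‖bbf p z x T‖) := summable_norm_ggP p hp hpsum hz hx
  have h1 : Bfun p z x = ∑' n : ℕ, ∑' v : Fin n → OTree, bbf p z x (OTree.node (List.ofFn v)) := by
    rw [Bfun_eq]; exact tsum_tree _ Sb
  have h2 : ∀ n : ℕ, (∑' v : Fin n → OTree, bbf p z x (OTree.node (List.ofFn v)))
      = (p n : ℂ) * z * ((Afun p z)^n + x * ((n : ℂ) * (Bfun p z x * (Afun p z)^(n-1)))) := by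
    intro n
    have hpoint : ∀ v : Fin n → OTree, bbf p z x (OTree.node (List.ofFn v))
        = (p n : ℂ) * z * ((∏ i, gg p z (v i))
            + x * ∑ i, ∏ j, (if j = i then bbf p z x else gg p z) (v j)) := by
      intro v
      have hm : ∀ i : Fin n, (∏ j, (if j = i then bbf p z x else gg p z) (v j))
          = Pfun (v i) x * ∏ j, gg p z (v j) :=
        fun i => mark_point _ _ _ (fun t => rfl) v i
      rw [Finset.sum_congr rfl (fun i _ => hm i), ← Finset.sum_mul]
      show gg p z (OTree.node (List.ofFn v)) * Pfun (OTree.node (List.ofFn v)) x = _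
      rw [gg_node, Pfun_node_fn]
      ring
    rw [tsum_congr hpoint, tsum_mul_left]
    congr 1
    obtain ⟨Sprod, Eprod⟩ := tsum_pi_prod (fun _ : Fin n => gg p z) (fun _ => Sg)
    have hmark := fun i : Fin n => tsum_mark (bbf p z x) (gg p z) Sb Sg n i
    have S2 : Summable (fun v : Fin n → OTree =>
        ∑ i, ∏ j, (if j = i then bbf p z x else gg p z) (v j)) :=
      summable_sum (fun i _ => (hmark i).1)
    rw [Summable.tsum_add Sprod.of_norm (S2.mul_left x), tsum_mul_left,
      Summable.tsum_finsetSum (fun i (_ : i ∈ Finset.univ) => (hmark i).1),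
      Finset.sum_congr rfl (fun i _ => (hmark i).2),
      Finset.sum_const, Finset.card_univ, Fintype.card_fin, nsmul_eq_mul,
      Eprod, Finset.prod_const, Finset.card_univ, Fintype.card_fin, ← Afun_eq, ← Bfun_eq]
  conv_lhs => rw [h1]
  rw [tsum_congr h2]
  have hA1 : ‖Afun p z‖ < 1 := lt_of_le_of_lt (norm_Afun_le p hp hpsum hz) hz
  have S0 := sumF0 p hp hpsum z hA1
  have S1 := sumF1 p hp hpsum hA1
  have pointws : ∀ n : ℕ, (p n : ℂ) * z *
        ((Afun p z)^n + x * ((n:ℂ) * (Bfun p z x * (Afun p z)^(n-1))))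
      = (p n : ℂ) * z * (Afun p z)^n
        + (x * z * Bfun p z x) * ((n:ℂ) * (p n : ℂ) * (Afun p z)^(n-1)) := by
    intro n; ring
  rw [tsum_congr pointws, Summable.tsum_add S0 (S1.mul_left _), tsum_mul_left, ← eqA p hp hpsum hz, PhiD]
  ring

theorem eqC (p : ℕ → ℝ) (hp : ∀ k, 0 ≤ p k) (hpsum : ∑' k, p k = 1)
    {z x y : ℂ} (hz : ‖z‖ < 1) (hx : ‖x‖ ≤ 1) (hy : ‖y‖ ≤ 1) :
    Cfun p z x y = Afun p z + x * z * PhiD p (Afun p z) * Bfun p z x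
      + y * z * PhiD p (Afun p z) * Bfun p z y
      + x * y * z * (PhiD p (Afun p z) * Cfun p z x y
          + PhiDD p (Afun p z) * (Bfun p z x * Bfun p z y)) := by
  classical
  have Sg := summable_norm_gg p hp hpsum hz
  have Sb1 : Summable (fun T => ‖bbf p z x T‖) := summable_norm_ggP p hp hpsum hz hx
  have Sb2 : Summable (fun T => ‖bbf p z y T‖) := summable_norm_ggP p hp hpsum hz hy
  have Sc : Summable (fun T => ‖ccf p z x y T‖) := summable_norm_ggPP p hp hpsum hz hx hy
  have h1 : Cfun p z x y = ∑' n : ℕ, ∑' v : Fin n → OTree, ccf p z x y (OTree.node (List.ofFn v)) := by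
    rw [Cfun_eq]; exact tsum_tree _ Sc
  have h2 : ∀ n : ℕ, (∑' v : Fin n → OTree, ccf p z x y (OTree.node (List.ofFn v)))
      = (p n : ℂ) * z * ((Afun p z)^n
        + x * ((n : ℂ) * (Bfun p z x * (Afun p z)^(n-1)))
        + y * ((n : ℂ) * (Bfun p z y * (Afun p z)^(n-1)))
        + x * y * (((n : ℂ) * (Cfun p z x y * (Afun p z)^(n-1)))
            + ((n*n - n : ℕ) : ℂ) * (Bfun p z x * (Bfun p z y * (Afun p z)^(n-2))))) := by
    intro n
    have hpoint : ∀ v : Fin n → OTree, ccf p z x y (OTree.node (List.ofFn v))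
        = (p n : ℂ) * z * ((∏ i, gg p z (v i))
            + x * ∑ i, ∏ j, (if j = i then bbf p z x else gg p z) (v j)
            + y * ∑ i, ∏ j, (if j = i then bbf p z y else gg p z) (v j)
            + x * y * ((∑ i, ∏ j, (if j = i then ccf p z x y else gg p z) (v j))
                + ∑ pr ∈ Finset.univ.offDiag,
                    ∏ l, (if l = pr.1 then bbf p z x else if l = pr.2 then bbf p z y else gg p z) (v l))) := by
      intro v
      have hm1 : ∀ i : Fin n, (∏ j, (if j = i then bbf p z x else gg p z) (v j))
          = Pfun (v i) x * ∏ j, gg p z (v j) :=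
        fun i => mark_point _ _ _ (fun t => rfl) v i
      have hm2 : ∀ i : Fin n, (∏ j, (if j = i then bbf p z y else gg p z) (v j))
          = Pfun (v i) y * ∏ j, gg p z (v j) :=
        fun i => mark_point _ _ _ (fun t => rfl) v i
      have hmc : ∀ i : Fin n, (∏ j, (if j = i then ccf p z x y else gg p z) (v j))
          = (Pfun (v i) x * Pfun (v i) y) * ∏ j, gg p z (v j) :=
        fun i => mark_point _ _ (fun t => Pfun t x * Pfun t y) (fun t => mul_assoc _ _ _) v i
      have hmd : ∀ pr ∈ (Finset.univ : Finset (Fin n)).offDiag,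
          (∏ l, (if l = pr.1 then bbf p z x else if l = pr.2 then bbf p z y else gg p z) (v l))
            = Pfun (v pr.1) x * Pfun (v pr.2) y * ∏ l, gg p z (v l) := by
        intro pr hpr
        exact mark2_point _ _ _ _ _ (fun t => rfl) (fun t => rfl) v (Finset.mem_offDiag.1 hpr).2.2
      rw [Finset.sum_congr rfl (fun i _ => hm1 i), Finset.sum_congr rfl (fun i _ => hm2 i),
        Finset.sum_congr rfl (fun i _ => hmc i), Finset.sum_congr rfl hmd,
        ← Finset.sum_mul, ← Finset.sum_mul, ← Finset.sum_mul, ← Finset.sum_mul]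
      have hdiag : (∑ i, Pfun (v i) x * Pfun (v i) y)
          + (∑ pr ∈ (Finset.univ : Finset (Fin n)).offDiag, Pfun (v pr.1) x * Pfun (v pr.2) y)
          = (∑ i, Pfun (v i) x) * (∑ i, Pfun (v i) y) := by
        rw [Finset.sum_mul_sum]
        rw [← Finset.sum_product' (f := fun i j => Pfun (v i) x * Pfun (v j) y)]
        rw [← Finset.diag_union_offDiag (Finset.univ : Finset (Fin n)),
          Finset.sum_union (Finset.disjoint_diag_offDiag _), Finset.sum_diag]
      have hlhs : ccf p z x y (OTree.node (List.ofFn v))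
          = ((p n : ℂ) * z * ∏ i, gg p z (v i))
            * (1 + x * ∑ i, Pfun (v i) x) * (1 + y * ∑ i, Pfun (v i) y) := by
        show gg p z (OTree.node (List.ofFn v)) * Pfun (OTree.node (List.ofFn v)) x
            * Pfun (OTree.node (List.ofFn v)) y = _
        rw [gg_node, Pfun_node_fn, Pfun_node_fn]
      rw [hlhs]
      linear_combination (-((p n : ℂ) * z * x * y * ∏ i, gg p z (v i))) * hdiag
    rw [tsum_congr hpoint, tsum_mul_left]
    congr 1
    obtain ⟨Sprod, Eprod⟩ := tsum_pi_prod (fun _ : Fin n => gg p z) (fun _ => Sg)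
    have hmark1 := fun i : Fin n => tsum_mark (bbf p z x) (gg p z) Sb1 Sg n i
    have hmark2 := fun i : Fin n => tsum_mark (bbf p z y) (gg p z) Sb2 Sg n i
    have hmarkc := fun i : Fin n => tsum_mark (ccf p z x y) (gg p z) Sc Sg n i
    have hmarkd : ∀ pr ∈ (Finset.univ : Finset (Fin n)).offDiag,
        Summable (fun v : Fin n → OTree =>
          ∏ l, (if l = pr.1 then bbf p z x else if l = pr.2 then bbf p z y else gg p z) (v l)) ∧
        (∑' v : Fin n → OTree,
          ∏ l, (if l = pr.1 then bbf p z x else if l = pr.2 then bbf p z y else gg p z) (v l))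
          = (∑' t, bbf p z x t) * ((∑' t, bbf p z y t) * (∑' t, gg p z t) ^ (n - 2)) := by
      intro pr hpr
      exact tsum_mark2 _ _ _ Sb1 Sb2 Sg n (Finset.mem_offDiag.1 hpr).2.2
    have S1 : Summable (fun v : Fin n → OTree =>
        ∑ i, ∏ j, (if j = i then bbf p z x else gg p z) (v j)) :=
      summable_sum (fun i _ => (hmark1 i).1)
    have S2 : Summable (fun v : Fin n → OTree =>
        ∑ i, ∏ j, (if j = i then bbf p z y else gg p z) (v j)) :=
      summable_sum (fun i _ => (hmark2 i).1)
    have S3 : Summable (fun v : Fin n → OTree =>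
        ∑ i, ∏ j, (if j = i then ccf p z x y else gg p z) (v j)) :=
      summable_sum (fun i _ => (hmarkc i).1)
    have S4 : Summable (fun v : Fin n → OTree =>
        ∑ pr ∈ (Finset.univ : Finset (Fin n)).offDiag,
          ∏ l, (if l = pr.1 then bbf p z x else if l = pr.2 then bbf p z y else gg p z) (v l)) :=
      summable_sum (fun pr hpr => (hmarkd pr hpr).1)
    rw [Summable.tsum_add (((Sprod.of_norm.add (S1.mul_left x)).add (S2.mul_left y)))
        ((S3.add S4).mul_left (x*y)),
      Summable.tsum_add (Sprod.of_norm.add (S1.mul_left x)) (S2.mul_left y),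
      Summable.tsum_add Sprod.of_norm (S1.mul_left x),
      tsum_mul_left, tsum_mul_left, tsum_mul_left,
      Summable.tsum_add S3 S4,
      Summable.tsum_finsetSum (fun i (_ : i ∈ Finset.univ) => (hmark1 i).1),
      Summable.tsum_finsetSum (fun i (_ : i ∈ Finset.univ) => (hmark2 i).1),
      Summable.tsum_finsetSum (fun i (_ : i ∈ Finset.univ) => (hmarkc i).1),
      Summable.tsum_finsetSum (fun pr hpr => (hmarkd pr hpr).1),
      Finset.sum_congr rfl (fun i _ => (hmark1 i).2),
      Finset.sum_congr rfl (fun i _ => (hmark2 i).2),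
      Finset.sum_congr rfl (fun i _ => (hmarkc i).2),
      Finset.sum_congr rfl (fun pr hpr => (hmarkd pr hpr).2),
      Eprod]
    rw [Finset.sum_const, Finset.sum_const, Finset.sum_const, Finset.sum_const,
      Finset.card_univ, Fintype.card_fin, Finset.offDiag_card,
      Finset.card_univ, Fintype.card_fin,
      Finset.prod_const, Finset.card_univ, Fintype.card_fin,
      nsmul_eq_mul, nsmul_eq_mul, nsmul_eq_mul, nsmul_eq_mul,
      ← Afun_eq, ← Bfun_eq, ← Bfun_eq, ← Cfun_eq]
  conv_lhs => rw [h1]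
  rw [tsum_congr h2]
  have hA1 : ‖Afun p z‖ < 1 := lt_of_le_of_lt (norm_Afun_le p hp hpsum hz) hz
  have S0 := sumF0 p hp hpsum z hA1
  have SF1 := sumF1 p hp hpsum hA1
  have SF2 := sumF2 p hp hpsum hA1
  have hcast : ∀ n : ℕ, ((n*n - n : ℕ) : ℂ) = (n : ℂ) * ((n : ℂ) - 1) := by
    intro n
    have h : n ≤ n * n := by
      cases n with
      | zero => simp
      | succ m => calc m + 1 = (m+1) * 1 := by ring
          _ ≤ (m+1) * (m+1) := Nat.mul_le_mul_left _ (by omega)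
    rw [Nat.cast_sub h]
    push_cast
    ring
  have pointws : ∀ n : ℕ, (p n : ℂ) * z * ((Afun p z)^n
        + x * ((n : ℂ) * (Bfun p z x * (Afun p z)^(n-1)))
        + y * ((n : ℂ) * (Bfun p z y * (Afun p z)^(n-1)))
        + x * y * (((n : ℂ) * (Cfun p z x y * (Afun p z)^(n-1)))
            + ((n*n - n : ℕ) : ℂ) * (Bfun p z x * (Bfun p z y * (Afun p z)^(n-2)))))
      = (p n : ℂ) * z * (Afun p z)^n
        + ((x * z * Bfun p z x) * ((n:ℂ) * (p n : ℂ) * (Afun p z)^(n-1))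
        + ((y * z * Bfun p z y) * ((n:ℂ) * (p n : ℂ) * (Afun p z)^(n-1))
        + ((x * y * z * Cfun p z x y) * ((n:ℂ) * (p n : ℂ) * (Afun p z)^(n-1))
        + (x * y * z * (Bfun p z x * Bfun p z y))
            * ((n:ℂ) * ((n:ℂ) - 1) * (p n : ℂ) * (Afun p z)^(n-2))))) := by
    intro n
    rw [hcast n]
    ring
  rw [tsum_congr pointws,
    Summable.tsum_add S0 (((SF1.mul_left _).add ((SF1.mul_left _).add
      ((SF1.mul_left _).add (SF2.mul_left _))))),
    Summable.tsum_add (SF1.mul_left _) ((SF1.mul_left _).add ((SF1.mul_left _).add (SF2.mul_left _))),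
    Summable.tsum_add (SF1.mul_left _) ((SF1.mul_left _).add (SF2.mul_left _)),
    Summable.tsum_add (SF1.mul_left _) (SF2.mul_left _),
    tsum_mul_left, tsum_mul_left, tsum_mul_left, tsum_mul_left,
    ← eqA p hp hpsum hz, PhiD, PhiDD]
  ring

theorem stmt_19 (p : ℕ → ℝ)
    (hp : ∀ k, 0 ≤ p k) (hpsum : ∑' k, p k = 1) (hp1 : p 1 < 1)
    (hpmean : ∑' k : ℕ, (k : ℝ) * p k = 1)
    (z x y : ℂ) (hz : ‖z‖ < 1) (hx : ‖x‖ ≤ 1) (hy : ‖y‖ ≤ 1) :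
    Cfun p z x y * (1 - x * y * z * PhiD p (Afun p z)) =
      x * y * z * PhiDD p (Afun p z) * Bfun p z x * Bfun p z y +
        Bfun p z x + Bfun p z y - Afun p z := by
  have hz' : ‖z‖ < 1 := by exact hz
  have hx' : ‖x‖ ≤ 1 := by exact hx
  have hy' : ‖y‖ ≤ 1 := by exact hy
  have hB1 := eqB p hp hpsum hz' hx'
  have hB2 := eqB p hp hpsum hz' hy'
  have hC := eqC p hp hpsum hz' hx' hy'
  linear_combination hC - hB1 - hB2
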